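/- Let (x_s)_{s≥1} be nonnegative reals and for j ≥ 0 set S_j = ∑_{s=jN}^{(j+1)N−1} x_s² (with the j = 0 block starting at s = 1). If V_N := 2·∑_{s=1}^N x_s² is slowly varying in N (Karamata) and diverges, then ∑_{j=1}^∞ (1/j)·S_j = o(V_N) as N → ∞. -/

import Mathlib

open Filter Finset

lemma abel_id (x : ℕ → ℝ) (N : ℕ) : ∀ n : ℕ,
    ∑ j ∈ range (n+1), (1/(j:ℝ)) * ∑ s ∈ Ico (j*N) ((j+1)*N), x s ^ 2
      = (∑ k ∈ range (n+1), (1/((k:ℝ)*((k:ℝ)+1))) * ∑ s ∈ Ico N ((k+1)*N), x s ^ 2)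
        + (∑ s ∈ Ico N ((n+1)*N), x s ^ 2) / ((n:ℝ)+1) := by
  intro n
  induction n with
  | zero => simp
  | succ m ih =>
      rw [sum_range_succ _ (m+1), ih, sum_range_succ _ (m+1)]
      have hsplit : ∑ s ∈ Ico N ((m+1+1)*N), x s ^ 2
          = (∑ s ∈ Ico N ((m+1)*N), x s ^ 2) + ∑ s ∈ Ico ((m+1)*N) ((m+1+1)*N), x s ^ 2 := by
        rw [Finset.sum_Ico_consecutive]
        · exact Nat.le_mul_of_pos_left N (Nat.succ_pos m)
        · exact Nat.mul_le_mul_right N (by omega)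
      have h1 : ((m:ℝ)+1) ≠ 0 := by positivity
      have h2 : ((m:ℝ)+2) ≠ 0 := by positivity
      rw [hsplit]
      push_cast
      field_simp
      ring

lemma tele_aux (m : ℕ) : ∀ t : ℕ,
    ∑ k ∈ Ico (m+1) (m+1+t), (1/((k:ℝ)*((k:ℝ)+1))) = 1/((m:ℝ)+1) - 1/((m:ℝ)+1+t) := by
  intro t
  induction t with
  | zero => simp
  | succ u ih =>
      rw [show m+1+(u+1) = (m+1+u)+1 from rfl, Finset.sum_Ico_succ_top (by omega), ih]
      have h1 : ((m:ℝ)+1+u) ≠ 0 := by positivity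
      have h2 : ((m:ℝ)+1+u+1) ≠ 0 := by positivity
      push_cast
      field_simp
      ring

lemma sum_bound (x : ℕ → ℝ) (hx : ∀ s, 0 ≤ x s) (N : ℕ)
    (hB : Summable (fun k : ℕ => (1/((k:ℝ)*((k:ℝ)+1))) * ∑ s ∈ Ico N ((k+1)*N), x s ^ 2)) :
    ∑' j : ℕ, (1/(j:ℝ)) * ∑ s ∈ Ico (j*N) ((j+1)*N), x s ^ 2
      ≤ 2 * ∑' k : ℕ, (1/((k:ℝ)*((k:ℝ)+1))) * ∑ s ∈ Ico N ((k+1)*N), x s ^ 2 := by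
  have hTnn : ∀ k : ℕ, 0 ≤ ∑ s ∈ Ico N ((k+1)*N), x s ^ 2 := fun k =>
    Finset.sum_nonneg fun s _ => sq_nonneg _
  have hann : ∀ k : ℕ, 0 ≤ 1/((k:ℝ)*((k:ℝ)+1)) := fun k => by positivity
  have htermnn : ∀ k : ℕ, 0 ≤ (1/((k:ℝ)*((k:ℝ)+1))) * ∑ s ∈ Ico N ((k+1)*N), x s ^ 2 :=
    fun k => mul_nonneg (hann k) (hTnn k)
  have hBnn : 0 ≤ ∑' k : ℕ, (1/((k:ℝ)*((k:ℝ)+1))) * ∑ s ∈ Ico N ((k+1)*N), x s ^ 2 :=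
    tsum_nonneg htermnn
  apply Real.tsum_le_of_sum_range_le
  · intro j
    exact mul_nonneg (by positivity) (Finset.sum_nonneg fun s _ => sq_nonneg _)
  · intro n
    match n with
    | 0 => simpa using hBnn
    | (m+1) =>
      rw [abel_id x N m]
      set B := ∑' k : ℕ, (1/((k:ℝ)*((k:ℝ)+1))) * ∑ s ∈ Ico N ((k+1)*N), x s ^ 2 with hBdef
      set T : ℕ → ℝ := fun k => ∑ s ∈ Ico N ((k+1)*N), x s ^ 2 with hTdef
      set a : ℕ → ℝ := fun k => 1/((k:ℝ)*((k:ℝ)+1)) with hadef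
      -- T is monotone
      have hTmono : ∀ p q : ℕ, p ≤ q → T p ≤ T q := by
        intro p q hpq
        apply Finset.sum_le_sum_of_subset_of_nonneg
        · apply Finset.Ico_subset_Ico le_rfl
          exact Nat.mul_le_mul_right N (by omega)
        · intro s _ _; exact sq_nonneg _
      -- tail block bound
      have htail : T m / ((m:ℝ)+1) ≤ 2 * ∑ k ∈ Ico (m+1) (2*m+2), a k * T k := by
        have h1 : ∑ k ∈ Ico (m+1) (2*m+2), a k * T m ≤ ∑ k ∈ Ico (m+1) (2*m+2), a k * T k := by
          apply Finset.sum_le_sum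
          intro k hk
          rw [Finset.mem_Ico] at hk
          exact mul_le_mul_of_nonneg_left (hTmono m k (by omega)) (hann k)
        have h2 : ∑ k ∈ Ico (m+1) (2*m+2), a k * T m
            = (1/((m:ℝ)+1) - 1/((m:ℝ)+1+(m+1))) * T m := by
          rw [← Finset.sum_mul]
          congr 1
          have := tele_aux m (m+1)
          rw [show m+1+(m+1) = 2*m+2 by ring] at this
          rw [this]
          push_cast
          ring
        have h3 : (1/((m:ℝ)+1) - 1/((m:ℝ)+1+(m+1))) * T m = T m / (2*((m:ℝ)+1)) := by
          have hm1 : ((m:ℝ)+1) ≠ 0 := by positivity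
          have hm2 : ((m:ℝ)+1+((m:ℝ)+1)) ≠ 0 := by positivity
          have hc : (1/((m:ℝ)+1) - 1/((m:ℝ)+1+(m+1))) = 1/(2*((m:ℝ)+1)) := by
            push_cast
            field_simp
            ring
          rw [hc]
          ring
        calc T m / ((m:ℝ)+1) = 2 * (T m / (2*((m:ℝ)+1))) := by
              field_simp
          _ = 2 * ((1/((m:ℝ)+1) - 1/((m:ℝ)+1+(m+1))) * T m) := by rw [h3]
          _ = 2 * ∑ k ∈ Ico (m+1) (2*m+2), a k * T m := by rw [h2]
          _ ≤ 2 * ∑ k ∈ Ico (m+1) (2*m+2), a k * T k := by linarith [h1]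
      -- splitting range (2m+2)
      have hsplit : ∑ k ∈ range (2*m+2), a k * T k
          = (∑ k ∈ range (m+1), a k * T k) + ∑ k ∈ Ico (m+1) (2*m+2), a k * T k := by
        simp only [Finset.range_eq_Ico]
        exact (Finset.sum_Ico_consecutive _ (Nat.zero_le (m+1)) (by omega : m+1 ≤ 2*m+2)).symm
      have hfin : ∑ k ∈ range (2*m+2), a k * T k ≤ B :=
        Summable.sum_le_tsum _ (fun k _ => htermnn k) hB
      have hAnn : 0 ≤ ∑ k ∈ range (m+1), a k * T k :=
        Finset.sum_nonneg fun k _ => htermnn k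
      calc (∑ k ∈ range (m+1), a k * T k) + T m / ((m:ℝ)+1)
          ≤ (∑ k ∈ range (m+1), a k * T k) + 2 * ∑ k ∈ Ico (m+1) (2*m+2), a k * T k := by
            linarith [htail]
        _ ≤ 2 * ∑ k ∈ range (2*m+2), a k * T k := by rw [hsplit]; linarith [hAnn]
        _ ≤ 2 * B := by linarith [hfin]
set_option maxHeartbeats 1000000 in
/-- If `V_N = 2∑_{s=1}^N x_s²` is slowly varying (Karamata) and diverges, then
`∑_{j≥1} (1/j)·S_j = o(V_N)`, where `S_j = ∑_{s=jN}^{(j+1)N−1} x_s²`. -/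
theorem block_weighted_sum_isLittleO
    (x : ℕ → ℝ) (hx : ∀ s, 0 ≤ x s)
    (V : ℕ → ℝ) (hV : ∀ N, V N = 2 * ∑ s ∈ Icc 1 N, x s ^ 2)
    (hslow : ∀ l : ℝ, 0 < l →
      Tendsto (fun N : ℕ => V ⌊l * N⌋₊ / V N) atTop (nhds 1))
    (hdiv : Tendsto V atTop atTop) :
    (fun N : ℕ => ∑' j : ℕ,
        (1 / (j : ℝ)) * ∑ s ∈ Ico (j * N) ((j + 1) * N), x s ^ 2) =o[atTop] V := by
  set q : ℝ := Real.sqrt 2 with hqdef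
  have hq2 : q ^ 2 = 2 := Real.sq_sqrt (by norm_num)
  have hqnn : 0 ≤ q := Real.sqrt_nonneg 2
  have hq1 : 1 < q := by nlinarith
  have hq0 : 0 < q := lt_trans one_pos hq1
  -- monotonicity and nonnegativity of V
  have hmono : Monotone V := by
    intro M M' h
    rw [hV, hV]
    have : ∑ s ∈ Icc 1 M, x s ^ 2 ≤ ∑ s ∈ Icc 1 M', x s ^ 2 := by
      apply Finset.sum_le_sum_of_subset_of_nonneg (Finset.Icc_subset_Icc le_rfl h)
      intro s _ _; exact sq_nonneg _
    linarith
  have hVnn : ∀ M, 0 ≤ V M := fun M => by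
    rw [hV]
    have : (0:ℝ) ≤ ∑ s ∈ Icc 1 M, x s ^ 2 := Finset.sum_nonneg fun s _ => sq_nonneg _
    linarith
  -- slow variation at natural multiples
  have hslowNat : ∀ c : ℕ, 0 < c →
      Tendsto (fun N : ℕ => V (c * N) / V N) atTop (nhds 1) := by
    intro c hc
    have h := hslow (c : ℝ) (by exact_mod_cast hc)
    apply h.congr
    intro N
    rw [show ((c:ℝ) * (N:ℝ)) = ((c * N : ℕ) : ℝ) by push_cast; ring, Nat.floor_natCast]
  -- doubling threshold
  have hev : ∀ᶠ N : ℕ in atTop, V (2 * N) ≤ q * V N ∧ 1 ≤ V N := by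
    have h1 : ∀ᶠ N : ℕ in atTop, V (2 * N) / V N ≤ q :=
      (hslowNat 2 (by norm_num)).eventually (eventually_le_nhds hq1)
    have h2 : ∀ᶠ N : ℕ in atTop, 1 ≤ V N := hdiv.eventually_ge_atTop 1
    filter_upwards [h1, h2] with N hN1 hN2
    refine ⟨?_, hN2⟩
    have hVp : 0 < V N := lt_of_lt_of_le one_pos hN2
    rw [div_le_iff₀ hVp] at hN1
    linarith
  obtain ⟨N₀, hN₀⟩ := eventually_atTop.mp hev
  have hVpos : ∀ N, N₀ ≤ N → 0 < V N := fun N h => lt_of_lt_of_le one_pos (hN₀ N h).2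
  -- Potter bound for powers of two
  have hpow : ∀ N, N₀ ≤ N → ∀ m : ℕ, V (2 ^ m * N) ≤ q ^ m * V N := by
    intro N hN m
    induction m with
    | zero => simp
    | succ m ih =>
        have hle : N ≤ 2 ^ m * N := Nat.le_mul_of_pos_left N (Nat.pow_pos (n := m) (by norm_num))
        calc V (2 ^ (m+1) * N) = V (2 * (2 ^ m * N)) := by
              congr 1; ring
          _ ≤ q * V (2 ^ m * N) := (hN₀ _ (le_trans hN hle)).1
          _ ≤ q * (q ^ m * V N) := by nlinarith
          _ = q ^ (m+1) * V N := by ring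
  -- Potter bound
  have hVk : ∀ N, N₀ ≤ N → ∀ k : ℕ, 1 ≤ k →
      V ((k + 1) * N) ≤ q * Real.sqrt k * V N := by
    intro N hN k hk
    set m := Nat.log 2 k with hm
    have hk2 : k + 1 ≤ 2 ^ (m + 1) := Nat.lt_pow_succ_log_self (by norm_num) k
    have h1 : V ((k + 1) * N) ≤ V (2 ^ (m + 1) * N) := hmono (Nat.mul_le_mul_right N hk2)
    have h2 : V (2 ^ (m + 1) * N) ≤ q ^ (m + 1) * V N := hpow N hN (m + 1)
    have h3 : q ^ m ≤ Real.sqrt k := by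
      rw [Real.le_sqrt (by positivity) (by positivity)]
      have : ((2:ℕ) ^ m : ℝ) ≤ (k : ℝ) := by
        exact_mod_cast Nat.pow_log_le_self 2 (by omega : k ≠ 0)
      calc (q ^ m) ^ 2 = (q ^ 2) ^ m := by ring
        _ = (2 : ℝ) ^ m := by rw [hq2]
        _ ≤ (k : ℝ) := by exact_mod_cast this
    calc V ((k + 1) * N) ≤ q ^ (m + 1) * V N := le_trans h1 h2
      _ = q ^ m * q * V N := by ring
      _ ≤ Real.sqrt k * q * V N :=
          mul_le_mul_of_nonneg_right (mul_le_mul_of_nonneg_right h3 hqnn) (hVnn N)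
      _ = q * Real.sqrt k * V N := by ring
  -- bound for the block sums
  have hTle : ∀ N, 1 ≤ N → ∀ k : ℕ,
      (∑ s ∈ Ico N ((k + 1) * N), x s ^ 2) ≤ V ((k + 1) * N) / 2 := by
    intro N hN k
    rw [hV]
    have heq : (2:ℝ) * (∑ s ∈ Icc 1 ((k+1)*N), x s ^ 2) / 2
        = ∑ s ∈ Icc 1 ((k+1)*N), x s ^ 2 := by ring
    rw [heq]
    apply Finset.sum_le_sum_of_subset_of_nonneg
    · intro s hs
      rw [Finset.mem_Ico] at hs
      rw [Finset.mem_Icc]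
      omega
    · intro s _ _; exact sq_nonneg _
  -- the dominating function
  set b : ℕ → ℝ := fun k => q * Real.sqrt k / (2 * ((k:ℝ) * ((k:ℝ) + 1))) with hbdef
  have hbnn : ∀ k, 0 ≤ b k := fun k => by
    rw [hbdef]
    positivity
  have hbsum : Summable b := by
    apply Summable.of_nonneg_of_le (f := fun k : ℕ => (q / 2) * (1 / (k:ℝ) ^ (3/2 : ℝ))) hbnn
    · intro k
      rcases Nat.eq_zero_or_pos k with rfl | hk
      · simp [hbdef, Real.zero_rpow (by norm_num : (3/2:ℝ) ≠ 0)]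
      · have hk0 : (0:ℝ) < k := by exact_mod_cast hk
        have hrw : (k:ℝ) ^ (3/2 : ℝ) = k * Real.sqrt k := by
          rw [show (3/2:ℝ) = 1 + 1/2 by norm_num, Real.rpow_add hk0, Real.rpow_one,
            ← Real.sqrt_eq_rpow]
        rw [hbdef, hrw]
        have hsq : Real.sqrt k * Real.sqrt k = k := Real.mul_self_sqrt hk0.le
        have hs0 : 0 < Real.sqrt k := Real.sqrt_pos.mpr hk0
        have heq : (q / 2) * (1 / ((k:ℝ) * Real.sqrt k)) = q / (2 * ((k:ℝ) * Real.sqrt k)) := by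
          ring
        rw [heq, div_le_div_iff₀ (by positivity) (by positivity)]
        nlinarith [mul_nonneg (mul_nonneg hqnn hk0.le) hk0.le]
    · exact (Real.summable_one_div_nat_rpow.mpr (by norm_num)).mul_left _
  -- key pointwise bounds for the normalized terms
  have hkey : ∀ N, N₀ ≤ N → 1 ≤ N → ∀ k : ℕ,
      0 ≤ (1 / ((k:ℝ) * ((k:ℝ) + 1))) * (∑ s ∈ Ico N ((k + 1) * N), x s ^ 2) / V N ∧
      (1 / ((k:ℝ) * ((k:ℝ) + 1))) * (∑ s ∈ Ico N ((k + 1) * N), x s ^ 2) / V N ≤ b k := by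
    intro N hN hN1 k
    have hVp := hVpos N hN
    have hTnn : 0 ≤ ∑ s ∈ Ico N ((k + 1) * N), x s ^ 2 :=
      Finset.sum_nonneg fun s _ => sq_nonneg _
    constructor
    · positivity
    · rcases Nat.eq_zero_or_pos k with rfl | hk
      · simp [hbdef]
      · have hkR : (0:ℝ) < k := by exact_mod_cast hk
        have hT2 : (∑ s ∈ Ico N ((k + 1) * N), x s ^ 2) ≤ q * Real.sqrt k * V N / 2 := by
          calc (∑ s ∈ Ico N ((k + 1) * N), x s ^ 2) ≤ V ((k + 1) * N) / 2 := hTle N hN1 k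
            _ ≤ q * Real.sqrt k * V N / 2 := by linarith [hVk N hN k hk]
        have hstep : (1 / ((k:ℝ) * ((k:ℝ) + 1))) * (∑ s ∈ Ico N ((k + 1) * N), x s ^ 2) / V N
            ≤ (1 / ((k:ℝ) * ((k:ℝ) + 1))) * (q * Real.sqrt k * V N / 2) / V N := by
          gcongr
        refine le_trans hstep (le_of_eq ?_)
        rw [hbdef]
        have hkne : ((k:ℝ) * ((k:ℝ) + 1)) ≠ 0 := by positivity
        field_simp
  -- ratio V(N-1)/V(N) → 1
  have hhalf : Tendsto (fun N : ℕ => V (N - 1) / V N) atTop (nhds 1) := by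
    apply tendsto_of_tendsto_of_tendsto_of_le_of_le' (hslow (1/2) (by norm_num))
      tendsto_const_nhds
    · filter_upwards [eventually_ge_atTop (max N₀ 1)] with N hN
      have hN1 : 1 ≤ N := le_trans (le_max_right _ _) hN
      have hVp : 0 < V N := hVpos N (le_trans (le_max_left _ _) hN)
      have hfl : ⌊(1/2 : ℝ) * N⌋₊ < N := by
        rw [Nat.floor_lt (by positivity)]
        have : (1:ℝ) ≤ (N:ℝ) := by exact_mod_cast hN1
        nlinarith
      exact div_le_div_of_nonneg_right (hmono (by omega)) hVp.le
    · filter_upwards [eventually_ge_atTop N₀] with N hN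
      exact (div_le_one (hVpos N hN)).mpr (hmono (Nat.sub_le N 1))
  -- each normalized term tends to 0
  have hTlim : ∀ k : ℕ, Tendsto (fun N : ℕ =>
      (1 / ((k:ℝ) * ((k:ℝ) + 1))) * (∑ s ∈ Ico N ((k + 1) * N), x s ^ 2) / V N)
      atTop (nhds 0) := by
    intro k
    have h1 : Tendsto (fun N : ℕ => V ((k + 1) * N) / V N) atTop (nhds 1) :=
      hslowNat (k + 1) (by omega)
    have hub : Tendsto (fun N : ℕ => (V ((k + 1) * N) / V N - V (N - 1) / V N) / 2)
        atTop (nhds 0) := by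
      have := (h1.sub hhalf).div_const 2
      simpa using this
    apply tendsto_of_tendsto_of_tendsto_of_le_of_le' tendsto_const_nhds hub
    · filter_upwards [eventually_ge_atTop N₀] with N hN
      have hVp := hVpos N hN
      have hTnn : 0 ≤ ∑ s ∈ Ico N ((k + 1) * N), x s ^ 2 :=
        Finset.sum_nonneg fun s _ => sq_nonneg _
      positivity
    · filter_upwards [eventually_ge_atTop (max N₀ 1)] with N hN
      have hN0 : N₀ ≤ N := le_trans (le_max_left _ _) hN
      have hN1 : 1 ≤ N := le_trans (le_max_right _ _) hN
      have hVp := hVpos N hN0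
      have hTnn : 0 ≤ ∑ s ∈ Ico N ((k + 1) * N), x s ^ 2 :=
        Finset.sum_nonneg fun s _ => sq_nonneg _
      -- the block sum is at most (V((k+1)N) - V(N-1))/2
      have hstep : (∑ s ∈ Ico N ((k + 1) * N), x s ^ 2)
          ≤ (V ((k + 1) * N) - V (N - 1)) / 2 := by
        rw [hV, hV]
        have hsub : Icc 1 (N - 1) ⊆ Icc 1 ((k + 1) * N) := by
          apply Finset.Icc_subset_Icc le_rfl
          have : N ≤ (k + 1) * N := Nat.le_mul_of_pos_left N (by omega)
          omega
        have hdiff : (2 * ∑ s ∈ Icc 1 ((k+1)*N), x s ^ 2 - 2 * ∑ s ∈ Icc 1 (N-1), x s ^ 2) / 2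
            = ∑ s ∈ Icc 1 ((k+1)*N) \ Icc 1 (N-1), x s ^ 2 := by
          rw [Finset.sum_sdiff_eq_sub hsub]
          ring
        rw [hdiff]
        apply Finset.sum_le_sum_of_subset_of_nonneg
        · intro s hs
          rw [Finset.mem_Ico] at hs
          rw [Finset.mem_sdiff, Finset.mem_Icc, Finset.mem_Icc]
          omega
        · intro s _ _; exact sq_nonneg _
      have hak1 : (1 / ((k:ℝ) * ((k:ℝ) + 1))) ≤ 1 := by
        rcases Nat.eq_zero_or_pos k with rfl | hk
        · norm_num
        · have hkR : (1:ℝ) ≤ k := by exact_mod_cast hk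
          rw [div_le_one (by positivity)]
          nlinarith
      have haknn : 0 ≤ (1 / ((k:ℝ) * ((k:ℝ) + 1))) := by positivity
      calc (1 / ((k:ℝ) * ((k:ℝ) + 1))) * (∑ s ∈ Ico N ((k + 1) * N), x s ^ 2) / V N
          ≤ (V ((k + 1) * N) - V (N - 1)) / 2 / V N := by
            apply div_le_div_of_nonneg_right _ hVp.le
            calc (1 / ((k:ℝ) * ((k:ℝ) + 1))) * (∑ s ∈ Ico N ((k + 1) * N), x s ^ 2)
                ≤ 1 * (∑ s ∈ Ico N ((k + 1) * N), x s ^ 2) :=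
                  mul_le_mul_of_nonneg_right hak1 hTnn
              _ = ∑ s ∈ Ico N ((k + 1) * N), x s ^ 2 := one_mul _
              _ ≤ (V ((k + 1) * N) - V (N - 1)) / 2 := hstep
        _ = (V ((k + 1) * N) / V N - V (N - 1) / V N) / 2 := by ring
  -- dominated convergence
  have hphi : Tendsto (fun N : ℕ => ∑' k : ℕ,
      (1 / ((k:ℝ) * ((k:ℝ) + 1))) * (∑ s ∈ Ico N ((k + 1) * N), x s ^ 2) / V N)
      atTop (nhds 0) := by
    have h0 : (0:ℝ) = ∑' _ : ℕ, (0:ℝ) := by simp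
    rw [h0]
    apply tendsto_tsum_of_dominated_convergence hbsum hTlim
    filter_upwards [eventually_ge_atTop (max N₀ 1)] with N hN k
    have hk := hkey N (le_trans (le_max_left _ _) hN) (le_trans (le_max_right _ _) hN) k
    rw [Real.norm_eq_abs, abs_of_nonneg hk.1]
    exact hk.2
  -- conclude
  have hcond : ∀ᶠ N : ℕ in atTop, V N = 0 →
      (∑' j : ℕ, (1 / (j : ℝ)) * ∑ s ∈ Ico (j * N) ((j + 1) * N), x s ^ 2) = 0 := by
    filter_upwards [eventually_ge_atTop N₀] with N hN h0
    exact absurd h0 (ne_of_gt (hVpos N hN))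
  rw [Asymptotics.isLittleO_iff_tendsto' hcond]
  apply squeeze_zero' (g := fun N : ℕ => 2 * ∑' k : ℕ,
      (1 / ((k:ℝ) * ((k:ℝ) + 1))) * (∑ s ∈ Ico N ((k + 1) * N), x s ^ 2) / V N)
  · filter_upwards [eventually_ge_atTop N₀] with N hN
    apply div_nonneg _ (hVnn N)
    apply tsum_nonneg
    intro j
    exact mul_nonneg (by positivity) (Finset.sum_nonneg fun s _ => sq_nonneg _)
  · filter_upwards [eventually_ge_atTop (max N₀ 1)] with N hN
    have hN0 : N₀ ≤ N := le_trans (le_max_left _ _) hN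
    have hN1 : 1 ≤ N := le_trans (le_max_right _ _) hN
    have hVp := hVpos N hN0
    have hFs : Summable (fun k : ℕ =>
        (1 / ((k:ℝ) * ((k:ℝ) + 1))) * (∑ s ∈ Ico N ((k + 1) * N), x s ^ 2) / V N) :=
      hbsum.of_nonneg_of_le (fun k => (hkey N hN0 hN1 k).1) (fun k => (hkey N hN0 hN1 k).2)
    have hBs : Summable (fun k : ℕ =>
        (1 / ((k:ℝ) * ((k:ℝ) + 1))) * (∑ s ∈ Ico N ((k + 1) * N), x s ^ 2)) := by
      apply (hFs.mul_right (V N)).congr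
      intro k
      exact div_mul_cancel₀ _ (ne_of_gt hVp)
    have hfB := sum_bound x hx N hBs
    rw [show (fun k : ℕ =>
        (1 / ((k:ℝ) * ((k:ℝ) + 1))) * (∑ s ∈ Ico N ((k + 1) * N), x s ^ 2) / V N)
        = fun k : ℕ =>
        ((1 / ((k:ℝ) * ((k:ℝ) + 1))) * (∑ s ∈ Ico N ((k + 1) * N), x s ^ 2)) / V N
        from rfl, tsum_div_const]
    calc (∑' j : ℕ, (1 / (j : ℝ)) * ∑ s ∈ Ico (j * N) ((j + 1) * N), x s ^ 2) / V N
        ≤ (2 * ∑' k : ℕ,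
            (1 / ((k:ℝ) * ((k:ℝ) + 1))) * (∑ s ∈ Ico N ((k + 1) * N), x s ^ 2)) / V N :=
          div_le_div_of_nonneg_right hfB hVp.le
      _ = 2 * ((∑' k : ℕ,
            (1 / ((k:ℝ) * ((k:ℝ) + 1))) * (∑ s ∈ Ico N ((k + 1) * N), x s ^ 2)) / V N) := by
          ring
  · simpa using hphi.const_mul 2
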